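/- Suppose F has real coefficients, the interval box I contains a root of F, √2·‖I_n − Y□F'(I)‖ < 1, and the set of conjugates {ȳ : y ∈ K_{x,Y}(I)} is contained in I. Then the unique root x⋆ of F in I is real. -/
import Mathlib


/-- The Krawczyk operator `K_{x,Y}(I) = x - Y F(x) + (I_n - Y □F'(I))(I - x)`, where
`𝓜 = □F'(I)` is an interval extension of `F'` on `I`. -/
def krawczyk {n : ℕ} (F : (Fin n → ℂ) → (Fin n → ℂ)) (I : Set (Fin n → ℂ))
    (𝓜 : Set ((Fin n → ℂ) →L[ℂ] (Fin n → ℂ))) (x : Fin n → ℂ)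
    (Y : (Fin n → ℂ) →L[ℂ] (Fin n → ℂ)) : Set (Fin n → ℂ) :=
  {w | ∃ M ∈ 𝓜, ∃ z ∈ I, w = x - Y (F x) + ((z - x) - Y (M (z - x)))}

/-- Entrywise complex conjugation on `ℂⁿ`. -/
noncomputable def conjVec {n : ℕ} (z : Fin n → ℂ) : Fin n → ℂ :=
  fun i => starRingEnd ℂ (z i)

/-- If `F` has real coefficients, `I` contains a root of `F`,
`√2 ‖I_n - Y □F'(I)‖ < 1`, and the set of conjugates of `K_{x,Y}(I)` is contained in `I`,
then the unique root `x⋆` of `F` in `I` is real. -/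
theorem krawczyk_realness {n : ℕ} (F : (Fin n → ℂ) → (Fin n → ℂ)) (I : Set (Fin n → ℂ))
    (hreal : ∀ z, F (conjVec z) = conjVec (F z))
    (𝓜 : Set ((Fin n → ℂ) →L[ℂ] (Fin n → ℂ)))
    (hmean : ∀ a ∈ I, ∀ b ∈ I, ∃ M ∈ 𝓜, F b - F a = M (b - a))
    (hext : ∀ y ∈ I, fderiv ℂ F y ∈ 𝓜)
    (x : Fin n → ℂ) (hx : x ∈ I)
    (Y : (Fin n → ℂ) →L[ℂ] (Fin n → ℂ)) (hY : IsUnit Y)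
    (hnorm : ∀ M ∈ 𝓜, Real.sqrt 2 * ‖ContinuousLinearMap.id ℂ (Fin n → ℂ) - Y.comp M‖ < 1)
    (hconjK : ∀ w ∈ krawczyk F I 𝓜 x Y, conjVec w ∈ I)
    (xstar : Fin n → ℂ) (hxstar : xstar ∈ I) (hroot : F xstar = 0) :
    conjVec xstar = xstar := by
  -- `xstar` is a fixed point of the Krawczyk operator
  obtain ⟨M, hM, heq⟩ := hmean x hx xstar hxstar
  have hmem : xstar ∈ krawczyk F I 𝓜 x Y := by
    refine ⟨M, hM, xstar, hxstar, ?_⟩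
    rw [← heq, hroot]
    simp only [zero_sub, map_neg, sub_neg_eq_add]
    abel
  -- hence its conjugate lies in `I`
  have hcI : conjVec xstar ∈ I := hconjK xstar hmem
  -- and the conjugate is also a root
  have hcroot : F (conjVec xstar) = 0 := by
    rw [hreal, hroot]
    funext i
    simp [conjVec]
  -- uniqueness of roots in `I`
  obtain ⟨M', hM', heq'⟩ := hmean xstar hxstar (conjVec xstar) hcI
  have hMd : M' (conjVec xstar - xstar) = 0 := by
    rw [← heq', hcroot, hroot, sub_zero]
  set d := conjVec xstar - xstar with hd
  have hfix : (ContinuousLinearMap.id ℂ (Fin n → ℂ) - Y.comp M') d = d := by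
    simp [hMd]
  have hle : ‖d‖ ≤ ‖ContinuousLinearMap.id ℂ (Fin n → ℂ) - Y.comp M'‖ * ‖d‖ := by
    conv_lhs => rw [← hfix]
    exact ContinuousLinearMap.le_opNorm _ _
  have h1 : (1 : ℝ) ≤ Real.sqrt 2 := by
    rw [show (1:ℝ) = Real.sqrt 1 by simp]
    exact Real.sqrt_le_sqrt (by norm_num)
  have hN := hnorm M' hM'
  have hNnn : (0:ℝ) ≤ ‖ContinuousLinearMap.id ℂ (Fin n → ℂ) - Y.comp M'‖ := norm_nonneg _
  have hlt : ‖ContinuousLinearMap.id ℂ (Fin n → ℂ) - Y.comp M'‖ < 1 := by nlinarith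
  have hd0 : d = 0 := by
    by_contra h
    have hdpos : 0 < ‖d‖ := norm_pos_iff.mpr h
    nlinarith
  have := sub_eq_zero.mp hd0
  exact this
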